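/- arXiv:2307.05054 — 5 statements merged into one kernel-verified Lean document; each statement's English description precedes it below -/
import Mathlib

section
/- Let Γ = (S, A, Ω, p, u) be an information aggregation game and let M = (Id_Ω, …, Id_Ω, m_d, Id_A) be an honest mechanism for Γ. Then M is incentive-compatible for the receiver (i.e., the receiver cannot strictly increase its expected utility by deviating from playing the mediator's recommendation) if and only if E_r(o_M) ≥ U_a for every action a ∈ A. -/
open Finset

/-- An information aggregation game with `n` senders and finite state space `Ω`.
The binary action set `A = {0,1}` is modelled by `Bool` (`false` = action `0`,
`true` = action `1`).  Player `some i` is sender `i`; player `none` is the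
receiver. -/
structure IAGame (n : ℕ) (Ω : Type*) [Fintype Ω] where
  /-- the (commonly known) prior distribution on states -/
  p : Ω → ℝ
  p_nonneg : ∀ ω, 0 ≤ p ω
  p_sum_one : ∑ ω, p ω = 1
  /-- `u j ω a` : utility of player `j` when action `a` is played at state `ω` -/
  u : Option (Fin n) → Ω → Bool → ℝ

/-- A mechanism for an information aggregation game: (possibly randomized)
sender strategies (`send i ω m` is the probability that sender `i` reports
message `m` when the state is `ω`), a (possibly randomized) mediator rule
(`med m` is the probability that the mediator recommends action `0` on the
message profile `m`; action `1` is recommended with the remaining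
probability), and a receiver strategy `recv` mapping the mediator's
recommendation to the action actually played. -/
structure Mech (n : ℕ) (Ω : Type*) [Fintype Ω] where
  send : Fin n → Ω → Ω → ℝ
  send_nonneg : ∀ i ω m, 0 ≤ send i ω m
  send_sum_one : ∀ i ω, ∑ m, send i ω m = 1
  med : (Fin n → Ω) → ℝ
  med_nonneg : ∀ m, 0 ≤ med m
  med_le_one : ∀ m, med m ≤ 1
  recv : Bool → Bool

variable {n : ℕ} {Ω : Type*} [Fintype Ω] [DecidableEq Ω]

namespace Mech

/-- Probability that the action finally played by the receiver is `0`
(= `false`), given that the mediator received the message profile `m`. -/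
def actFalse (M : Mech n Ω) (m : Fin n → Ω) : ℝ :=
  (if M.recv false = false then M.med m else 0) +
  (if M.recv true = false then 1 - M.med m else 0)

/-- Probability that the message profile `m` is sent when the state is `ω`
(the senders randomize independently). -/
def profProb (M : Mech n Ω) (ω : Ω) (m : Fin n → Ω) : ℝ :=
  ∏ i, M.send i ω (m i)

/-- The outcome implemented by a mechanism: `M.out ω` is the probability that
the action finally played is `0` at state `ω`.  (Since `A = {0,1}`, a
distribution on `A` is identified with the probability it gives to `0`, so
`M.out : Ω → ℝ` faithfully represents the map `o_M : Ω → Δ(A)`.) -/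
def out (M : Mech n Ω) (ω : Ω) : ℝ :=
  ∑ m : Fin n → Ω, M.profProb ω m * M.actFalse m

/-- The mechanism in which the receiver unilaterally deviates to strategy `g`. -/
def withRecv (M : Mech n Ω) (g : Bool → Bool) : Mech n Ω :=
  { M with recv := g }

/-- The mechanism in which sender `i` unilaterally deviates to the (possibly
randomized) strategy `s`. -/
def devSend (M : Mech n Ω) (i : Fin n) (s : Ω → Ω → ℝ)
    (h1 : ∀ ω m, 0 ≤ s ω m) (h2 : ∀ ω, ∑ m, s ω m = 1) : Mech n Ω where
  send := fun j => if j = i then s else M.send j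
  send_nonneg := by
    intro j ω m
    by_cases h : j = i
    · simpa [h] using h1 ω m
    · simpa [h] using M.send_nonneg j ω m
  send_sum_one := by
    intro j ω
    by_cases h : j = i
    · simpa [h] using h2 ω
    · simpa [h] using M.send_sum_one j ω
  med := M.med
  med_nonneg := M.med_nonneg
  med_le_one := M.med_le_one
  recv := M.recv

/-- A mechanism is honest if every sender truthfully reports the state with
probability one and the receiver plays the mediator's recommendation. -/
def Honest (M : Mech n Ω) : Prop :=
  (∀ i ω m, M.send i ω m = if m = ω then 1 else 0) ∧ M.recv = id

end Mech

namespace IAGame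

/-- Expected utility of player `j` at state `ω` when action `0` is played with
probability `q` (and action `1` with probability `1 - q`). -/
def lin (G : IAGame n Ω) (j : Option (Fin n)) (ω : Ω) (q : ℝ) : ℝ :=
  q * G.u j ω false + (1 - q) * G.u j ω true

/-- `U_a` : the receiver's expected utility from always playing action `a`. -/
def Uconst (G : IAGame n Ω) (a : Bool) : ℝ :=
  ∑ ω, G.p ω * G.u none ω a

/-- `E_j(o)` : expected utility of player `j` under the outcome `o`, where
`o ω` is the probability that action `0` is played at state `ω`. -/
def EUout (G : IAGame n Ω) (j : Option (Fin n)) (o : Ω → ℝ) : ℝ :=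
  ∑ ω, G.p ω * G.lin j ω (o ω)

/-- Expected utility of player `j` when the mechanism `M` is played. -/
def EU (G : IAGame n Ω) (M : Mech n Ω) (j : Option (Fin n)) : ℝ :=
  ∑ ω, G.p ω * ∑ m : Fin n → Ω, M.profProb ω m * G.lin j ω (M.actFalse m)

/-- A mechanism is incentive-compatible if neither the receiver nor any single
sender can strictly increase its expected utility by unilaterally deviating
(the mediator's rule being fixed). -/
def IC (G : IAGame n Ω) (M : Mech n Ω) : Prop :=
  (∀ g : Bool → Bool, G.EU (M.withRecv g) none ≤ G.EU M none) ∧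
  (∀ (i : Fin n) (s : Ω → Ω → ℝ) (h1 : ∀ ω m, 0 ≤ s ω m)
      (h2 : ∀ ω, ∑ m, s ω m = 1),
      G.EU (M.devSend i s h1 h2) (some i) ≤ G.EU M (some i))

/-- A mechanism is truthful if it is honest and incentive-compatible. -/
def Truthful (G : IAGame n Ω) (M : Mech n Ω) : Prop :=
  M.Honest ∧ G.IC M

/-- The honest reporting distribution on message profiles: at state `ω` the
profile `(ω, …, ω)` is sent with probability one. -/
def honestRep : Ω → (Fin n → Ω) → ℝ :=
  fun ω m => if m = (fun _ => ω) then 1 else 0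

/-- `τ` is a valid joint (possibly randomized, possibly correlated) deviation
of the coalition `K` from honest reporting: `τ ω` is a probability
distribution on message profiles, and senders outside `K` keep reporting the
true state. -/
def IsDev (K : Finset (Fin n)) (τ : Ω → (Fin n → Ω) → ℝ) : Prop :=
  (∀ ω m, 0 ≤ τ ω m) ∧ (∀ ω, ∑ m : Fin n → Ω, τ ω m = 1) ∧
  (∀ ω m, τ ω m ≠ 0 → ∀ i, i ∉ K → m i = ω)

/-- Expected utility of sender `i` when the senders' reports are distributed
according to `τ`, the mediator uses the rule `f` (`f m` = probability of
recommending action `0` on the message profile `m`) and the receiver obeys the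
mediator's recommendation. -/
def senderEU (G : IAGame n Ω) (f : (Fin n → Ω) → ℝ) (i : Fin n)
    (τ : Ω → (Fin n → Ω) → ℝ) : ℝ :=
  ∑ ω, G.p ω * ∑ m : Fin n → Ω, τ ω m * G.lin (some i) ω (f m)

/-- The honest mechanism with mediator rule `f` is `k`-resilient
incentive-compatible for the senders: no (nonempty) coalition of at most `k`
senders has a joint deviation strictly increasing the expected utility of
every member; i.e., for every coalition and every deviation, some member of
the coalition does not strictly increase its expected utility. -/
def KResSenders (G : IAGame n Ω) (f : (Fin n → Ω) → ℝ) (k : ℕ) : Prop :=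
  ∀ K : Finset (Fin n), K.Nonempty → K.card ≤ k →
    ∀ τ : Ω → (Fin n → Ω) → ℝ, IsDev K τ →
      ∃ i ∈ K, G.senderEU f i τ ≤ G.senderEU f i honestRep

/-- The honest mechanism with mediator rule `f` is strong `k`-resilient
incentive-compatible for the senders: for every (nonempty) coalition of at
most `k` senders and every joint deviation, no member of the coalition
strictly increases its expected utility. -/
def StrongKResSenders (G : IAGame n Ω) (f : (Fin n → Ω) → ℝ) (k : ℕ) : Prop :=
  ∀ K : Finset (Fin n), K.Nonempty → K.card ≤ k →
    ∀ τ : Ω → (Fin n → Ω) → ℝ, IsDev K τ →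
      ∀ i ∈ K, G.senderEU f i τ ≤ G.senderEU f i honestRep

/-- A (honest) mechanism is `k`-resilient incentive-compatible if (a) the
receiver cannot strictly increase its expected utility by deviating, and
(b) the senders' honest strategy profile is a `k`-resilient Nash equilibrium
(with the mediator rule and the receiver strategy fixed). -/
def KResIC (G : IAGame n Ω) (M : Mech n Ω) (k : ℕ) : Prop :=
  (∀ g : Bool → Bool, G.EU (M.withRecv g) none ≤ G.EU M none) ∧
  G.KResSenders M.med k

/-- Strong `k`-resilient incentive compatibility. -/
def StrongKResIC (G : IAGame n Ω) (M : Mech n Ω) (k : ℕ) : Prop :=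
  (∀ g : Bool → Bool, G.EU (M.withRecv g) none ≤ G.EU M none) ∧
  G.StrongKResSenders M.med k

/-- A mechanism is `k`-resilient truthful if it is honest and `k`-resilient
incentive-compatible. -/
def KResTruthful (G : IAGame n Ω) (M : Mech n Ω) (k : ℕ) : Prop :=
  M.Honest ∧ G.KResIC M k

/-- A mechanism is strong `k`-resilient truthful if it is honest and strong
`k`-resilient incentive-compatible. -/
def StrongKResTruthful (G : IAGame n Ω) (M : Mech n Ω) (k : ℕ) : Prop :=
  M.Honest ∧ G.StrongKResIC M k

/-- Sender `i` strictly prefers action `a` to the other action in state `ω`. -/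
def SPrefers (G : IAGame n Ω) (i : Fin n) (ω : Ω) (a : Bool) : Prop :=
  G.u (some i) ω (!a) < G.u (some i) ω a

/-- Sender `i` weakly prefers action `a` to the other action in state `ω`. -/
def WPrefers (G : IAGame n Ω) (i : Fin n) (ω : Ω) (a : Bool) : Prop :=
  G.u (some i) ω (!a) ≤ G.u (some i) ω a

end IAGame

/-- `C(m, m')` : the set of senders whose messages differ in the two message
profiles `m` and `m'`. -/
def diffSet (m m' : Fin n → Ω) : Finset (Fin n) :=
  univ.filter fun i => m i ≠ m' i

namespace IAGame

/-- The relation `m ≺ₖ m'` : the set `C` of senders whose messages differ has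
size at most `k`, and either (a) `m` is `ω`-pure for some `ω` and every sender
in `C` strictly prefers action `1` to action `0` in state `ω`, or (b) `m'` is
`ω`-pure for some `ω` and every sender in `C` strictly prefers action `0` to
action `1` in state `ω`. -/
def Prec (G : IAGame n Ω) (k : ℕ) (m m' : Fin n → Ω) : Prop :=
  (diffSet m m').card ≤ k ∧
  ((∃ ω : Ω, m = (fun _ => ω) ∧ ∀ i ∈ diffSet m m', G.SPrefers i ω true) ∨
   (∃ ω : Ω, m' = (fun _ => ω) ∧ ∀ i ∈ diffSet m m', G.SPrefers i ω false))

/-- The relation `m ≺ₖˢ m'` (the strong variant): the set `C` of senders whose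
messages differ has size at most `k`, and either (a) `m` is `ω`-pure for some
`ω` and at least one sender in `C` strictly prefers `1` to `0` in `ω`, or (b)
`m'` is `ω`-pure for some `ω` and at least one sender in `C` strictly prefers
`0` to `1` in `ω`. -/
def PrecS (G : IAGame n Ω) (k : ℕ) (m m' : Fin n → Ω) : Prop :=
  (diffSet m m').card ≤ k ∧
  ((∃ ω : Ω, m = (fun _ => ω) ∧ ∃ i ∈ diffSet m m', G.SPrefers i ω true) ∨
   (∃ ω : Ω, m' = (fun _ => ω) ∧ ∃ i ∈ diffSet m m', G.SPrefers i ω false))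

/-- `ω ≤ₖ ω'` : there is a chain `ω⃗ ≺ₖ m⃗¹ ≺ₖ ⋯ ≺ₖ m⃗ᵗ ≺ₖ ω⃗'` from the
`ω`-pure input to the `ω'`-pure input. -/
def LeK (G : IAGame n Ω) (k : ℕ) (ω ω' : Ω) : Prop :=
  Relation.TransGen (G.Prec k) (fun _ => ω) (fun _ => ω')

/-- `ω ≤ₖˢ ω'` : the strong variant of `≤ₖ`. -/
def LeKS (G : IAGame n Ω) (k : ℕ) (ω ω' : Ω) : Prop :=
  Relation.TransGen (G.PrecS k) (fun _ => ω) (fun _ => ω')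

end IAGame

lemma aux_profProb_honest {n : ℕ} {Ω : Type*} [Fintype Ω] [DecidableEq Ω]
    (M : Mech n Ω) (hs : ∀ i ω m, M.send i ω m = if m = ω then 1 else 0)
    (ω : Ω) (m : Fin n → Ω) :
    M.profProb ω m = if m = (fun _ => ω) then 1 else 0 := by
  unfold Mech.profProb
  by_cases h : m = fun _ => ω
  · simp [h, hs]
  · obtain ⟨i, hi⟩ : ∃ i, m i ≠ ω := by
      by_contra hc; push_neg at hc; exact h (funext hc)
    rw [if_neg h]
    exact Finset.prod_eq_zero (Finset.mem_univ i) (by simp [hs, hi])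

lemma aux_sum_prof {n : ℕ} {Ω : Type*} [Fintype Ω] [DecidableEq Ω]
    (M : Mech n Ω) (hs : ∀ i ω m, M.send i ω m = if m = ω then 1 else 0)
    (ω : Ω) (X : (Fin n → Ω) → ℝ) :
    ∑ m : Fin n → Ω, M.profProb ω m * X m = X (fun _ => ω) := by
  rw [Finset.sum_congr rfl (fun m _ => by rw [aux_profProb_honest M hs])]
  simp [ite_mul]

/-- An honest mechanism `M` is incentive-compatible for the
receiver (the receiver cannot strictly increase its expected utility by
deviating from playing the mediator's recommendation) if and only if
`E_r(o_M) ≥ U_a` for every action `a`. -/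
theorem statement1 {n : ℕ} {Ω : Type*} [Fintype Ω] [DecidableEq Ω]
    (G : IAGame n Ω) (M : Mech n Ω) (hM : M.Honest) :
    (∀ g : Bool → Bool, G.EU (M.withRecv g) none ≤ G.EU M none) ↔
      (∀ a : Bool, G.Uconst a ≤ G.EUout none M.out) := by
  obtain ⟨hs, hr⟩ := hM
  have hEUg : ∀ g : Bool → Bool, G.EU (M.withRecv g) none =
      ∑ ω, G.p ω * G.lin none ω
        ((if g false = false then M.med (fun _ => ω) else 0) +
         (if g true = false then 1 - M.med (fun _ => ω) else 0)) := by
    intro g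
    unfold IAGame.EU
    refine Finset.sum_congr rfl fun ω _ => ?_
    rw [aux_sum_prof (M.withRecv g) hs ω]
    simp [Mech.actFalse, Mech.withRecv]
    left; congr
  have hEUM : G.EU M none = ∑ ω, G.p ω * G.lin none ω (M.med (fun _ => ω)) := by
    unfold IAGame.EU
    refine Finset.sum_congr rfl fun ω _ => ?_
    rw [aux_sum_prof M hs ω]
    simp [Mech.actFalse, hr]
  have hout : G.EUout none M.out = G.EU M none := by
    rw [hEUM]
    unfold IAGame.EUout Mech.out
    refine Finset.sum_congr rfl fun ω _ => ?_
    rw [aux_sum_prof M hs ω]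
    simp [Mech.actFalse, hr]
  have hUf : G.Uconst false = G.EU (M.withRecv (fun _ => false)) none := by
    rw [hEUg]
    unfold IAGame.Uconst
    refine Finset.sum_congr rfl fun ω _ => ?_
    simp [IAGame.lin]
  have hUt : G.Uconst true = G.EU (M.withRecv (fun _ => true)) none := by
    rw [hEUg]
    unfold IAGame.Uconst
    refine Finset.sum_congr rfl fun ω _ => ?_
    simp [IAGame.lin]
  constructor
  · intro h a
    rw [hout]
    cases a
    · rw [hUf]; exact h _
    · rw [hUt]; exact h _
  · intro h g
    have h0 := h false
    have h1 := h true
    rw [hout] at h0 h1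
    rw [hEUg g]
    match hgf : g false, hgt : g true with
    | false, true =>
      rw [hEUM]
      refine le_of_eq (Finset.sum_congr rfl fun ω _ => ?_)
      simp
    | false, false =>
      calc _ = G.Uconst false := by
              rw [hUf, hEUg]
        _ ≤ _ := h0
    | true, true =>
      calc _ = G.Uconst true := by
              rw [hUt, hEUg]
        _ ≤ _ := h1
    | true, false =>
      have key : (∑ ω, G.p ω * G.lin none ω
          ((if (false : Bool) = false then M.med (fun _ => ω) else 0) +
           (if (false : Bool) = false then 1 - M.med (fun _ => ω) else 0) -
           M.med (fun _ => ω))) + G.EU M none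
          = G.Uconst false + G.Uconst true := by
        rw [hEUM]
        unfold IAGame.Uconst
        rw [← Finset.sum_add_distrib, ← Finset.sum_add_distrib]
        refine Finset.sum_congr rfl fun ω _ => ?_
        simp [IAGame.lin]
        ring
      have heq : (∑ ω, G.p ω * G.lin none ω
          ((if (true : Bool) = false then M.med (fun _ => ω) else 0) +
           (if (false : Bool) = false then 1 - M.med (fun _ => ω) else 0)))
          = ∑ ω, G.p ω * G.lin none ω
          ((if (false : Bool) = false then M.med (fun _ => ω) else 0) +
           (if (false : Bool) = false then 1 - M.med (fun _ => ω) else 0) -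
           M.med (fun _ => ω)) := by
        refine Finset.sum_congr rfl fun ω _ => ?_
        simp
      rw [heq]
      linarith
end

section
/- Let Γ = (S, A, Ω, p, u) be an information aggregation game with |S| > 2. Then an outcome o : Ω → Δ(A) of Γ is implementable by a truthful mechanism if and only if E_r(o) ≥ U_a for every action a ∈ A. -/
open Finset

variable {n : ℕ} {Ω : Type*} [Fintype Ω] [DecidableEq Ω]

set_option linter.unusedSectionVars false

section proofAux

variable {n : ℕ} {Ω : Type*} [Fintype Ω] [DecidableEq Ω]

lemma honest_prof (M : Mech n Ω) (h : ∀ i ω m, M.send i ω m = if m = ω then 1 else 0)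
    (ω : Ω) (m : Fin n → Ω) :
    M.profProb ω m = if m = (fun _ => ω) then 1 else 0 := by
  unfold Mech.profProb
  simp only [h]
  rw [Finset.prod_boole]
  by_cases hm : m = (fun _ => ω)
  · simp [hm]
  · have : ¬ (∀ i ∈ Finset.univ, m i = ω) := by
      intro hall
      exact hm (funext fun i => hall i (Finset.mem_univ i))
    simp only [hm, if_false, this, if_false]

lemma honest_sum (M : Mech n Ω) (h : ∀ i ω m, M.send i ω m = if m = ω then 1 else 0)
    (ω : Ω) (F : (Fin n → Ω) → ℝ) :
    ∑ m : Fin n → Ω, M.profProb ω m * F m = F (fun _ => ω) := by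
  rw [Finset.sum_eq_single (fun _ => ω)]
  · rw [honest_prof M h]; simp
  · intro m _ hm; rw [honest_prof M h]; simp [hm]
  · simp

lemma prof_sum_one (M : Mech n Ω) (ω : Ω) :
    ∑ m : Fin n → Ω, M.profProb ω m = 1 := by
  unfold Mech.profProb
  rw [← Fintype.prod_sum (fun i x => M.send i ω x)]
  simp [M.send_sum_one]

/-- The robust mediator rule used in the backward direction. -/
def robustMed (hn : 2 < n) (o : Ω → ℝ) : (Fin n → Ω) → ℝ :=
  fun m => if m ⟨0, by omega⟩ = m ⟨1, by omega⟩ then o (m ⟨0, by omega⟩) else o (m ⟨2, hn⟩)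

lemma robustMed_const (hn : 2 < n) (o : Ω → ℝ) (ω : Ω) :
    robustMed hn o (fun _ => ω) = o ω := by
  simp [robustMed]

lemma robustMed_robust (hn : 2 < n) (o : Ω → ℝ) (i : Fin n) (ω : Ω) (m : Fin n → Ω)
    (h : ∀ j, j ≠ i → m j = ω) : robustMed hn o m = o ω := by
  set i0 : Fin n := ⟨0, by omega⟩ with hi0
  set i1 : Fin n := ⟨1, by omega⟩ with hi1
  set i2 : Fin n := ⟨2, hn⟩ with hi2
  have e01 : i0 ≠ i1 := by simp [hi0, hi1, Fin.ext_iff]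
  have e02 : i0 ≠ i2 := by simp [hi0, hi2, Fin.ext_iff]
  have e12 : i1 ≠ i2 := by simp [hi1, hi2, Fin.ext_iff]
  unfold robustMed
  by_cases hc : m i0 = m i1
  · have h0 : m i0 = ω := by
      rcases eq_or_ne i0 i with h0 | h0
      · rw [hc]; exact h i1 (h0 ▸ e01.symm)
      · exact h i0 h0
    simp only [← hi0, ← hi1, hc, if_true]
    rw [← hc, h0]
  · have h2 : m i2 = ω := by
      apply h i2
      intro h2
      exact hc ((h i0 (h2 ▸ e02)).trans (h i1 (h2 ▸ e12)).symm)
    simp only [← hi0, ← hi1, ← hi2, hc, if_false, h2]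

lemma actFalse_id (M : Mech n Ω) (h : M.recv = id) (m : Fin n → Ω) :
    M.actFalse m = M.med m := by
  simp [Mech.actFalse, h]

/-- The mechanism used in the backward direction: honest senders, robust
mediator rule, obedient receiver. -/
noncomputable def theMech (hn : 2 < n) (o : Ω → ℝ) (ho0 : ∀ ω, 0 ≤ o ω)
    (ho1 : ∀ ω, o ω ≤ 1) : Mech n Ω where
  send := fun _ ω m => if m = ω then 1 else 0
  send_nonneg := fun _ ω m => by by_cases h : m = ω <;> simp [h]
  send_sum_one := fun _ _ => by simp
  med := robustMed hn o
  med_nonneg := fun m => by unfold robustMed; split <;> exact ho0 _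
  med_le_one := fun m => by unfold robustMed; split <;> exact ho1 _
  recv := id

lemma theMech_out (hn : 2 < n) (o : Ω → ℝ) (ho0 : ∀ ω, 0 ≤ o ω)
    (ho1 : ∀ ω, o ω ≤ 1) : (theMech hn o ho0 ho1).out = o := by
  funext ω
  unfold Mech.out
  rw [honest_sum _ (fun _ _ _ => rfl) ω, actFalse_id _ rfl]
  exact robustMed_const hn o ω

end proofAux

/-- In an information aggregation game with more than two
senders, an outcome `o` is implementable by a truthful mechanism if and only
if `E_r(o) ≥ U_a` for every action `a`. -/
theorem statement2 {n : ℕ} {Ω : Type*} [Fintype Ω] [DecidableEq Ω]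
    (hn : 2 < n) (G : IAGame n Ω) (o : Ω → ℝ)
    (ho0 : ∀ ω, 0 ≤ o ω) (ho1 : ∀ ω, o ω ≤ 1) :
    (∃ M : Mech n Ω, G.Truthful M ∧ M.out = o) ↔
      (∀ a : Bool, G.Uconst a ≤ G.EUout none o) := by
  constructor
  · rintro ⟨M, ⟨⟨hsend, hrecv⟩, hICr, -⟩, hout⟩ a
    have hact : ∀ ω : Ω, M.actFalse (fun _ => ω) = o ω := by
      intro ω
      have h1 : M.out ω = M.actFalse (fun _ => ω) := honest_sum M hsend ω _
      rw [← h1, hout]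
    have hEU : G.EU M none = G.EUout none o := by
      unfold IAGame.EU IAGame.EUout
      exact Finset.sum_congr rfl fun ω _ => by rw [honest_sum M hsend ω, hact]
    have hdev := hICr (fun _ => a)
    rw [hEU] at hdev
    refine le_trans (le_of_eq ?_) hdev
    unfold IAGame.EU IAGame.Uconst
    refine Finset.sum_congr rfl fun ω _ => ?_
    congr 1
    rw [honest_sum (M.withRecv (fun _ => a)) hsend ω]
    cases a <;> simp [Mech.withRecv, Mech.actFalse, IAGame.lin]
  · intro ha
    set M : Mech n Ω := theMech hn o ho0 ho1 with hM
    have hsend : ∀ i ω m, M.send i ω m = if m = ω then 1 else 0 := fun _ _ _ => rfl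
    have hmed : ∀ m : Fin n → Ω, M.med m = robustMed hn o m := fun _ => rfl
    have hEUo : ∀ j, G.EU M j = ∑ ω, G.p ω * G.lin j ω (o ω) := by
      intro j
      unfold IAGame.EU
      refine Finset.sum_congr rfl fun ω _ => ?_
      rw [honest_sum M hsend ω, actFalse_id M rfl, hmed, robustMed_const]
    have hEUr : G.EU M none = G.EUout none o := hEUo none
    refine ⟨M, ⟨⟨hsend, rfl⟩, ?_, ?_⟩, theMech_out hn o ho0 ho1⟩
    · -- receiver IC
      intro g
      have hg : G.EU (M.withRecv g) none = ∑ ω, G.p ω * G.lin none ω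
          ((if g false = false then o ω else 0) +
           (if g true = false then 1 - o ω else 0)) := by
        unfold IAGame.EU
        refine Finset.sum_congr rfl fun ω _ => ?_
        rw [honest_sum (M.withRecv g) hsend ω]
        have hmed' : (M.withRecv g).med (fun _ => ω) = o ω := robustMed_const hn o ω
        unfold Mech.actFalse
        rw [hmed']
        rfl
      rw [hg, hEUr]
      have h0 := ha false
      have h1 := ha true
      cases hgf : g false <;> cases hgt : g true <;>
        simp only [hgf, hgt, if_true, if_false, Bool.false_eq_true,
          Bool.true_eq_false, eq_self_iff_true]
      · -- g ≡ false : always action 0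
        have : (∑ ω, G.p ω * G.lin none ω (o ω + (1 - o ω))) = G.Uconst false := by
          unfold IAGame.Uconst IAGame.lin
          exact Finset.sum_congr rfl fun ω _ => by ring
        rw [this]; exact h0
      · -- g = id
        refine le_of_eq ?_
        unfold IAGame.EUout
        exact Finset.sum_congr rfl fun ω _ => by norm_num
      · -- g = flip
        have key : (∑ ω, G.p ω * G.lin none ω (0 + (1 - o ω))) + G.EUout none o
            = G.Uconst false + G.Uconst true := by
          unfold IAGame.EUout IAGame.Uconst IAGame.lin
          rw [← Finset.sum_add_distrib, ← Finset.sum_add_distrib]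
          exact Finset.sum_congr rfl fun ω _ => by ring
        linarith
      · -- g ≡ true : always action 1
        have : (∑ ω, G.p ω * G.lin none ω (0 + 0)) = G.Uconst true := by
          unfold IAGame.Uconst IAGame.lin
          exact Finset.sum_congr rfl fun ω _ => by ring
        rw [this]; exact h1
    · -- sender IC
      intro i s h1 h2
      refine le_of_eq ?_
      rw [hEUo (some i)]
      unfold IAGame.EU
      refine Finset.sum_congr rfl fun ω _ => ?_
      congr 1
      have step : ∀ m : Fin n → Ω,
          (M.devSend i s h1 h2).profProb ω m *
            G.lin (some i) ω ((M.devSend i s h1 h2).actFalse m)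
          = (M.devSend i s h1 h2).profProb ω m * G.lin (some i) ω (o ω) := by
        intro m
        by_cases hp : (M.devSend i s h1 h2).profProb ω m = 0
        · rw [hp, zero_mul, zero_mul]
        · congr 2
          have hj : ∀ j, j ≠ i → m j = ω := by
            intro j hji
            by_contra hne
            apply hp
            unfold Mech.profProb
            refine Finset.prod_eq_zero (Finset.mem_univ j) ?_
            show (if j = i then s else M.send j) ω (m j) = 0
            rw [if_neg hji, hsend, if_neg hne]
          rw [actFalse_id _ rfl]
          exact robustMed_robust hn o i ω m hj
      rw [Finset.sum_congr rfl (fun m _ => step m), ← Finset.sum_mul,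
        prof_sum_one, one_mul]
end

section
/- Let Γ = (S, A, Ω, p, u) be an information aggregation game with n senders and let k be a positive integer with 2k < n. Then an outcome o : Ω → Δ(A) of Γ is implementable by a k-resilient truthful mechanism if and only if E_r(o) ≥ U_a for every action a ∈ A. -/
open Finset

variable {n : ℕ} {Ω : Type*} [Fintype Ω] [DecidableEq Ω]

-- auxiliary lemmas to insert before statement3
section Aux

set_option linter.unusedSectionVars false

variable {n : ℕ} {Ω : Type*} [Fintype Ω] [DecidableEq Ω]

lemma sum_indicator_mul (c : Fin n → Ω) (F : (Fin n → Ω) → ℝ) :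
    ∑ m : Fin n → Ω, (if m = c then (1:ℝ) else 0) * F m = F c := by
  rw [Finset.sum_eq_single c]
  · simp
  · intro b _ hb; simp [hb]
  · intro h; exact absurd (mem_univ c) h

lemma profProb_honest (M : Mech n Ω)
    (hs : ∀ i ω m, M.send i ω m = if m = ω then 1 else 0) (ω : Ω) (m : Fin n → Ω) :
    M.profProb ω m = if m = (fun _ => ω) then 1 else 0 := by
  unfold Mech.profProb
  by_cases h : m = fun _ => ω
  · rw [if_pos h]
    have h' : ∀ i, m i = ω := fun i => congrFun h i
    simp [hs, h']
  · rw [if_neg h]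
    obtain ⟨i, hi⟩ := Function.ne_iff.mp h
    exact Finset.prod_eq_zero (mem_univ i) (by simp [hs, hi])

lemma EU_honest_send (G : IAGame n Ω) (M : Mech n Ω)
    (hs : ∀ i ω m, M.send i ω m = if m = ω then 1 else 0) (j : Option (Fin n)) :
    G.EU M j = ∑ ω, G.p ω * G.lin j ω (M.actFalse (fun _ => ω)) := by
  unfold IAGame.EU
  refine Finset.sum_congr rfl fun ω _ => ?_
  congr 1
  calc ∑ m : Fin n → Ω, M.profProb ω m * G.lin j ω (M.actFalse m)
      = ∑ m : Fin n → Ω, (if m = (fun _ => ω) then (1:ℝ) else 0) * G.lin j ω (M.actFalse m) := by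
        refine Finset.sum_congr rfl fun m _ => ?_
        rw [profProb_honest M hs]
    _ = G.lin j ω (M.actFalse (fun _ => ω)) := sum_indicator_mul _ _

lemma out_honest (M : Mech n Ω)
    (hs : ∀ i ω m, M.send i ω m = if m = ω then 1 else 0) (ω : Ω) :
    M.out ω = M.actFalse (fun _ => ω) := by
  unfold Mech.out
  calc ∑ m : Fin n → Ω, M.profProb ω m * M.actFalse m
      = ∑ m : Fin n → Ω, (if m = (fun _ => ω) then (1:ℝ) else 0) * M.actFalse m := by
        refine Finset.sum_congr rfl fun m _ => ?_
        rw [profProb_honest M hs]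
    _ = M.actFalse (fun _ => ω) := sum_indicator_mul _ _

/-- Majority rule: recommend action `0` with probability `o ω` if some state
`ω` is reported by at least `n - k` senders; otherwise arbitrary. -/
noncomputable def medRule (k : ℕ) (o : Ω → ℝ) (m : Fin n → Ω) : ℝ :=
  if h : ∃ ω : Ω, n - k ≤ (univ.filter fun i => m i = ω).card then o h.choose else 0

lemma maj_unique {k : ℕ} (hkn : 2 * k < n) {m : Fin n → Ω} {ω ω' : Ω}
    (h1 : n - k ≤ (univ.filter fun i => m i = ω).card)
    (h2 : n - k ≤ (univ.filter fun i => m i = ω').card) : ω = ω' := by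
  set A := univ.filter fun i => m i = ω with hA
  set B := univ.filter fun i => m i = ω' with hB
  have hU : (A ∪ B).card ≤ n := by
    have := Finset.card_le_univ (A ∪ B)
    simpa using this
  have hcui := Finset.card_union_add_card_inter A B
  have hne : (A ∩ B).Nonempty := Finset.card_pos.mp (by omega)
  obtain ⟨i, hi⟩ := hne
  rw [Finset.mem_inter, hA, hB, Finset.mem_filter, Finset.mem_filter] at hi
  rw [← hi.1.2, ← hi.2.2]

lemma medRule_eq {k : ℕ} (hkn : 2 * k < n) (o : Ω → ℝ) {K : Finset (Fin n)}
    (hK : K.card ≤ k) {m : Fin n → Ω} {ω : Ω} (hm : ∀ i, i ∉ K → m i = ω) :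
    medRule k o m = o ω := by
  have hsub : Kᶜ ⊆ univ.filter fun i => m i = ω := by
    intro i hi
    rw [Finset.mem_compl] at hi
    simp only [Finset.mem_filter, Finset.mem_univ, true_and]
    exact hm i hi
  have hcard : n - k ≤ (univ.filter fun i => m i = ω).card := by
    have h1 : Kᶜ.card ≤ (univ.filter fun i => m i = ω).card := Finset.card_le_card hsub
    have h2 : Kᶜ.card = n - K.card := by
      rw [Finset.card_compl]; simp
    omega
  have hex : ∃ ω : Ω, n - k ≤ (univ.filter fun i => m i = ω).card := ⟨ω, hcard⟩
  rw [medRule, dif_pos hex]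
  exact congrArg o (maj_unique hkn hex.choose_spec hcard)

lemma medRule_pure {n : ℕ} {k : ℕ} (hkn : 2 * k < n) (o : Ω → ℝ) (ω : Ω) :
    medRule k o (fun (_ : Fin n) => ω) = o ω :=
  medRule_eq hkn o (K := ∅) (by simp) (fun _ _ => rfl)

end Aux

section Main

set_option linter.unusedSectionVars false

variable {n : ℕ} {Ω : Type*} [Fintype Ω] [DecidableEq Ω]

/-- The honest mechanism with the majority mediator rule. -/
noncomputable def majMech (n : ℕ) (Ω : Type*) [Fintype Ω] [DecidableEq Ω]
    (k : ℕ) (o : Ω → ℝ) (ho0 : ∀ ω, 0 ≤ o ω) (ho1 : ∀ ω, o ω ≤ 1) : Mech n Ω where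
  send := fun _ ω m => if m = ω then 1 else 0
  send_nonneg := by intro i ω m; by_cases h : m = ω <;> simp [h]
  send_sum_one := by intro i ω; simp
  med := medRule k o
  med_nonneg := by
    intro m; unfold medRule; split
    · exact ho0 _
    · exact le_rfl
  med_le_one := by
    intro m; unfold medRule; split
    · exact ho1 _
    · exact zero_le_one
  recv := id

lemma majMech_actFalse (k : ℕ) (o : Ω → ℝ) (ho0 : ∀ ω, 0 ≤ o ω)
    (ho1 : ∀ ω, o ω ≤ 1) (m : Fin n → Ω) :
    (majMech n Ω k o ho0 ho1).actFalse m = medRule k o m := by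
  show medRule k o m + 0 = medRule k o m
  exact add_zero _

lemma majMech_withRecv_actFalse (k : ℕ) (o : Ω → ℝ) (ho0 : ∀ ω, 0 ≤ o ω)
    (ho1 : ∀ ω, o ω ≤ 1) (g : Bool → Bool) (m : Fin n → Ω) :
    ((majMech n Ω k o ho0 ho1).withRecv g).actFalse m =
      (if g false = false then medRule k o m else 0) +
      (if g true = false then 1 - medRule k o m else 0) := rfl

theorem statement3' {n : ℕ} {Ω : Type*} [Fintype Ω] [DecidableEq Ω]
    (G : IAGame n Ω) (k : ℕ) (hk : 1 ≤ k) (hkn : 2 * k < n)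
    (o : Ω → ℝ) (ho0 : ∀ ω, 0 ≤ o ω) (ho1 : ∀ ω, o ω ≤ 1) :
    (∃ M : Mech n Ω, G.KResTruthful M k ∧ M.out = o) ↔
      (∀ a : Bool, G.Uconst a ≤ G.EUout none o) := by
  constructor
  · rintro ⟨M, ⟨⟨hsend, hrecv⟩, hRIC, _⟩, hout⟩
    have hact : ∀ ω, M.actFalse (fun _ => ω) = o ω := fun ω => by
      rw [← out_honest M hsend, hout]
    have hEU : G.EU M none = G.EUout none o := by
      rw [EU_honest_send G M hsend]
      exact Finset.sum_congr rfl fun ω _ => by rw [hact]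
    intro a
    cases a
    · have h1 := hRIC (fun _ => false)
      rw [EU_honest_send G (M.withRecv (fun _ => false)) hsend none, hEU] at h1
      refine le_trans (le_of_eq ?_) h1
      unfold IAGame.Uconst
      refine Finset.sum_congr rfl fun ω _ => ?_
      congr 1
      have hq : (M.withRecv (fun _ => false)).actFalse (fun _ => ω) = 1 := by
        simp [Mech.actFalse, Mech.withRecv]
      rw [hq]; simp [IAGame.lin]
    · have h1 := hRIC (fun _ => true)
      rw [EU_honest_send G (M.withRecv (fun _ => true)) hsend none, hEU] at h1
      refine le_trans (le_of_eq ?_) h1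
      unfold IAGame.Uconst
      refine Finset.sum_congr rfl fun ω _ => ?_
      congr 1
      have hq : (M.withRecv (fun _ => true)).actFalse (fun _ => ω) = 0 := by
        simp [Mech.actFalse, Mech.withRecv]
      rw [hq]; simp [IAGame.lin]
  · intro h
    have hpure : ∀ ω : Ω, medRule k o (fun (_ : Fin n) => ω) = o ω := medRule_pure hkn o
    have hsend : ∀ i (ω m : Ω), (majMech n Ω k o ho0 ho1).send i ω m
        = if m = ω then 1 else 0 := fun _ _ _ => rfl
    have hMEU : G.EU (majMech n Ω k o ho0 ho1) none = G.EUout none o := by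
      rw [EU_honest_send G _ hsend]
      refine Finset.sum_congr rfl fun ω _ => ?_
      rw [majMech_actFalse, hpure ω]
    refine ⟨majMech n Ω k o ho0 ho1, ⟨⟨fun _ _ _ => rfl, rfl⟩, ?_, ?_⟩, ?_⟩
    · -- receiver IC
      intro g
      have hEUg : G.EU ((majMech n Ω k o ho0 ho1).withRecv g) none =
          ∑ ω, G.p ω * G.lin none ω
            ((if g false = false then o ω else 0) +
             (if g true = false then 1 - o ω else 0)) := by
        rw [EU_honest_send G ((majMech n Ω k o ho0 ho1).withRecv g) hsend]
        refine Finset.sum_congr rfl fun ω _ => ?_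
        rw [majMech_withRecv_actFalse, hpure ω]
      rw [hEUg, hMEU]
      cases hf : g false <;> cases ht : g true
      · have e : (∑ ω, G.p ω * G.lin none ω
            ((if (false:Bool) = false then o ω else 0) +
             if (false:Bool) = false then 1 - o ω else 0)) = G.Uconst false := by
          unfold IAGame.Uconst
          refine Finset.sum_congr rfl fun ω _ => ?_
          rw [if_pos rfl, if_pos rfl]
          unfold IAGame.lin; ring
        rw [e]; exact h false
      · have e : (∑ ω, G.p ω * G.lin none ω
            ((if (false:Bool) = false then o ω else 0) +
             if (true:Bool) = false then 1 - o ω else 0)) = G.EUout none o := by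
          unfold IAGame.EUout
          refine Finset.sum_congr rfl fun ω _ => ?_
          rw [if_pos rfl, if_neg (by decide : ¬((true:Bool) = false)), add_zero]
        rw [e]
      · have e : (∑ ω, G.p ω * G.lin none ω
            ((if (true:Bool) = false then o ω else 0) +
             if (false:Bool) = false then 1 - o ω else 0))
            = G.Uconst false + G.Uconst true - G.EUout none o := by
          unfold IAGame.Uconst IAGame.EUout
          rw [← Finset.sum_add_distrib, ← Finset.sum_sub_distrib]
          refine Finset.sum_congr rfl fun ω _ => ?_
          rw [if_neg (by decide : ¬((true:Bool) = false)), if_pos rfl]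
          unfold IAGame.lin; ring
        rw [e]
        linarith [h false, h true]
      · have e : (∑ ω, G.p ω * G.lin none ω
            ((if (true:Bool) = false then o ω else 0) +
             if (true:Bool) = false then 1 - o ω else 0)) = G.Uconst true := by
          unfold IAGame.Uconst
          refine Finset.sum_congr rfl fun ω _ => ?_
          rw [if_neg (by decide : ¬((true:Bool) = false)),
            if_neg (by decide : ¬((true:Bool) = false))]
          unfold IAGame.lin; ring
        rw [e]; exact h true
    · -- k-resilience of senders
      intro K hKne hKcard τ hτ
      obtain ⟨i0, hi0⟩ := hKne
      refine ⟨i0, hi0, le_of_eq ?_⟩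
      unfold IAGame.senderEU
      refine Finset.sum_congr rfl fun ω _ => ?_
      congr 1
      have hL : ∑ m : Fin n → Ω, τ ω m * G.lin (some i0) ω ((majMech n Ω k o ho0 ho1).med m)
          = G.lin (some i0) ω (o ω) := by
        have key : ∀ m : Fin n → Ω,
            τ ω m * G.lin (some i0) ω ((majMech n Ω k o ho0 ho1).med m)
            = τ ω m * G.lin (some i0) ω (o ω) := by
          intro m
          by_cases hm : τ ω m = 0
          · rw [hm]; ring
          · have : (majMech n Ω k o ho0 ho1).med m = o ω :=
              medRule_eq hkn o hKcard (fun j hj => hτ.2.2 ω m hm j hj)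
            rw [this]
        rw [Finset.sum_congr rfl fun m _ => key m, ← Finset.sum_mul, hτ.2.1, one_mul]
      have hR : ∑ m : Fin n → Ω,
          IAGame.honestRep ω m * G.lin (some i0) ω ((majMech n Ω k o ho0 ho1).med m)
          = G.lin (some i0) ω (o ω) := by
        unfold IAGame.honestRep
        rw [sum_indicator_mul (fun _ => ω)
          (fun m => G.lin (some i0) ω ((majMech n Ω k o ho0 ho1).med m))]
        show G.lin (some i0) ω (medRule k o (fun _ => ω)) = _
        rw [hpure ω]
      rw [hL, hR]
    · -- outcome
      funext ω
      rw [out_honest _ hsend, majMech_actFalse, hpure ω]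

end Main

/-- In an information aggregation game with `n` senders, if
`k ≥ 1` and `2k < n`, an outcome `o` is implementable by a `k`-resilient
truthful mechanism if and only if `E_r(o) ≥ U_a` for every action `a`. -/
theorem statement3 {n : ℕ} {Ω : Type*} [Fintype Ω] [DecidableEq Ω]
    (G : IAGame n Ω) (k : ℕ) (hk : 1 ≤ k) (hkn : 2 * k < n)
    (o : Ω → ℝ) (ho0 : ∀ ω, 0 ≤ o ω) (ho1 : ∀ ω, o ω ≤ 1) :
    (∃ M : Mech n Ω, G.KResTruthful M k ∧ M.out = o) ↔
      (∀ a : Bool, G.Uconst a ≤ G.EUout none o) := by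
  exact statement3' G k hk hkn o ho0 ho1
end

section
/- Let Γ = (S, A, Ω, p, u) be an information aggregation game with Ω = {ω¹,…,ω^m}, and let real numbers y_1,…,y_m be given. Then the following are equivalent: (i) for all i, j ∈ [m], if ω⃗^i ≺_k ω⃗^j or there exists an input m⃗ ∈ Ω^n with ω⃗^i ≺_k m⃗ ≺_k ω⃗^j, then y_i ≤ y_j; (ii) for all i, j ∈ [m], if ω^i ≤_k ω^j then y_i ≤ y_j. -/
open Finset

variable {n : ℕ} {Ω : Type*} [Fintype Ω] [DecidableEq Ω]

/-- Lemma 4.  For real numbers `(y ω)_{ω ∈ Ω}` the following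
are equivalent: (i) whenever `ω⃗ ≺ₖ ω⃗'`, or `ω⃗ ≺ₖ m⃗ ≺ₖ ω⃗'` for some input
`m⃗`, one has `y ω ≤ y ω'`; (ii) whenever `ω ≤ₖ ω'` one has `y ω ≤ y ω'`. -/
theorem statement8 {n : ℕ} {Ω : Type*} [Fintype Ω] [DecidableEq Ω]
    (G : IAGame n Ω) (k : ℕ) (y : Ω → ℝ) :
    (∀ ω ω' : Ω,
        (G.Prec k (fun _ => ω) (fun _ => ω') ∨
          ∃ m : Fin n → Ω, G.Prec k (fun _ => ω) m ∧ G.Prec k m (fun _ => ω')) →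
        y ω ≤ y ω') ↔
      (∀ ω ω' : Ω, G.LeK k ω ω' → y ω ≤ y ω') := by
  constructor
  · intro H ω ω' h
    -- key auxiliary: each `Prec` step has a pure endpoint
    have pureEnd : ∀ m m' : Fin n → Ω, G.Prec k m m' →
        (∃ μ : Ω, m = fun _ => μ) ∨ (∃ μ : Ω, m' = fun _ => μ) := by
      rintro m m' ⟨-, (⟨μ, hμ, -⟩ | ⟨μ, hμ, -⟩)⟩
      · exact Or.inl ⟨μ, hμ⟩
      · exact Or.inr ⟨μ, hμ⟩
    -- strengthen: for the fixed endpoint ω', prove a property of the start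
    have main : ∀ (a : Fin n → Ω), Relation.TransGen (G.Prec k) a (fun _ => ω') →
        ((∀ μ : Ω, a = (fun _ => μ) → y μ ≤ y ω') ∧
         (∀ μ : Ω, G.Prec k (fun _ => μ) a → y μ ≤ y ω')) := by
      intro a h
      induction h using Relation.TransGen.head_induction_on with
      | single h =>
        rename_i m
        constructor
        · intro μ hμ
          exact H μ ω' (Or.inl (hμ ▸ h))
        · intro μ hμ
          exact H μ ω' (Or.inr ⟨m, hμ, h⟩)
      | head h' h ih =>
        rename_i m c
        constructor
        · intro μ hμ
          exact ih.2 μ (hμ ▸ h')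
        · intro μ hμ
          rcases pureEnd m c h' with ⟨ν, hν⟩ | ⟨ν, hν⟩
          · have h1 : y μ ≤ y ν := H μ ν (Or.inl (hν ▸ hμ))
            have h2 : y ν ≤ y ω' := ih.2 ν (hν ▸ h')
            linarith
          · have h1 : y μ ≤ y ν := H μ ν (Or.inr ⟨m, hμ, hν ▸ h'⟩)
            have h2 : y ν ≤ y ω' := ih.1 ν hν
            linarith
    exact (main _ h).1 ω rfl
  · intro H ω ω' h
    rcases h with h | ⟨m, h1, h2⟩
    · exact H ω ω' (Relation.TransGen.single h)
    · exact H ω ω' ((Relation.TransGen.single h1).tail h2)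
end

section
/- Let Γ = (S, A, Ω, p, u) be an information aggregation game with n senders, let 1 ≤ k ≤ n, and let ω, ω' ∈ Ω be distinct states. Partition S into X_{0,1}^{0,1}, X_{0,1}^{1,0}, X_{1,0}^{0,1}, X_{1,0}^{1,0}, where X_{0,1}^{0,1} is the set of senders that weakly prefer 0 to 1 in ω and strictly prefer 0 to 1 in ω', X_{0,1}^{1,0} those that weakly prefer 0 to 1 in ω and weakly prefer 1 to 0 in ω', X_{1,0}^{0,1} those that strictly prefer 1 to 0 in ω and strictly prefer 0 to 1 in ω', and X_{1,0}^{1,0} those that strictly prefer 1 to 0 in ω and weakly prefer 1 to 0 in ω'. Then there exists an input m⃗ ∈ Ω^n with ω⃗ ≺_k m⃗ ≺_k ω⃗' if and only if X_{0,1}^{1,0} = ∅, 2k ≥ n, |X_{0,1}^{0,1}| ≤ k, and |X_{1,0}^{1,0}| ≤ k. -/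
open Finset

variable {n : ℕ} {Ω : Type*} [Fintype Ω] [DecidableEq Ω]

open scoped Classical in
/-- For distinct states `ω ≠ ω'` and `1 ≤ k ≤ n`, partition
the senders into `X₀₁⁰¹` (weakly prefer `0` in `ω`, strictly prefer `0` in
`ω'`), `X₀₁¹⁰` (weakly prefer `0` in `ω`, weakly prefer `1` in `ω'`), `X₁₀⁰¹`
(strictly prefer `1` in `ω`, strictly prefer `0` in `ω'`) and `X₁₀¹⁰`
(strictly prefer `1` in `ω`, weakly prefer `1` in `ω'`).  There exists an
input `m⃗` with `ω⃗ ≺ₖ m⃗ ≺ₖ ω⃗'` if and only if `X₀₁¹⁰ = ∅`, `2k ≥ n`,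
`|X₀₁⁰¹| ≤ k` and `|X₁₀¹⁰| ≤ k`. -/
theorem statement10 {n : ℕ} {Ω : Type*} [Fintype Ω] [DecidableEq Ω]
    (G : IAGame n Ω) (k : ℕ) (hk1 : 1 ≤ k) (hkn : k ≤ n)
    (ω ω' : Ω) (hne : ω ≠ ω') :
    (∃ m : Fin n → Ω, G.Prec k (fun _ => ω) m ∧ G.Prec k m (fun _ => ω')) ↔
      ((Finset.univ.filter fun i => G.WPrefers i ω false ∧ G.WPrefers i ω' true)
          = ∅ ∧
        n ≤ 2 * k ∧
        (Finset.univ.filter fun i =>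
          G.WPrefers i ω false ∧ G.SPrefers i ω' false).card ≤ k ∧
        (Finset.univ.filter fun i =>
          G.SPrefers i ω true ∧ G.WPrefers i ω' true).card ≤ k) := by
  classical
  have hn1 : 1 ≤ n := le_trans hk1 hkn
  have hWS : ∀ (i : Fin n) (σ : Ω), G.WPrefers i σ false ↔ ¬ G.SPrefers i σ true := by
    intro i σ; simp [IAGame.WPrefers, IAGame.SPrefers, not_lt]
  have hWS' : ∀ (i : Fin n) (σ : Ω), G.WPrefers i σ true ↔ ¬ G.SPrefers i σ false := by
    intro i σ; simp [IAGame.WPrefers, IAGame.SPrefers, not_lt]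
  have hpure : ∀ (a b : Ω), (fun _ : Fin n => a) = (fun _ => b) → a = b := by
    intro a b h
    exact congrFun h ⟨0, hn1⟩
  constructor
  · rintro ⟨m, ⟨hc1, hd1⟩, ⟨hc2, hd2⟩⟩
    have hC1 : ∀ i, i ∈ diffSet (fun _ => ω) m ↔ m i ≠ ω := by
      intro i; simp [diffSet, ne_comm]
    have hC2 : ∀ i, i ∈ diffSet m (fun _ => ω') ↔ m i ≠ ω' := by
      intro i; simp [diffSet]
    -- a reusable finisher for the "all senders strictly prefer 1 in ω" case
    have finishA : (∀ i, G.SPrefers i ω true) → n ≤ k →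
        ((Finset.univ.filter fun i => G.WPrefers i ω false ∧ G.WPrefers i ω' true)
            = ∅ ∧
          n ≤ 2 * k ∧
          (Finset.univ.filter fun i =>
            G.WPrefers i ω false ∧ G.SPrefers i ω' false).card ≤ k ∧
          (Finset.univ.filter fun i =>
            G.SPrefers i ω true ∧ G.WPrefers i ω' true).card ≤ k) := by
      intro hA hnk
      refine ⟨?_, by omega, ?_, ?_⟩
      · rw [Finset.filter_eq_empty_iff]
        intro i _ hi
        exact ((hWS i ω).1 hi.1) (hA i)
      · have : (Finset.univ.filter fun i =>
            G.WPrefers i ω false ∧ G.SPrefers i ω' false) = ∅ := by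
          rw [Finset.filter_eq_empty_iff]
          intro i _ hi
          exact ((hWS i ω).1 hi.1) (hA i)
        simp [this]
      · calc (Finset.univ.filter fun i =>
            G.SPrefers i ω true ∧ G.WPrefers i ω' true).card
            ≤ (Finset.univ : Finset (Fin n)).card := Finset.card_filter_le _ _
          _ ≤ k := by simpa using hnk
    -- a reusable finisher for the "all senders strictly prefer 0 in ω'" case
    have finishB : (∀ i, G.SPrefers i ω' false) → n ≤ k →
        ((Finset.univ.filter fun i => G.WPrefers i ω false ∧ G.WPrefers i ω' true)
            = ∅ ∧
          n ≤ 2 * k ∧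
          (Finset.univ.filter fun i =>
            G.WPrefers i ω false ∧ G.SPrefers i ω' false).card ≤ k ∧
          (Finset.univ.filter fun i =>
            G.SPrefers i ω true ∧ G.WPrefers i ω' true).card ≤ k) := by
      intro hB hnk
      refine ⟨?_, by omega, ?_, ?_⟩
      · rw [Finset.filter_eq_empty_iff]
        intro i _ hi
        exact ((hWS' i ω').1 hi.2) (hB i)
      · calc (Finset.univ.filter fun i =>
            G.WPrefers i ω false ∧ G.SPrefers i ω' false).card
            ≤ (Finset.univ : Finset (Fin n)).card := Finset.card_filter_le _ _
          _ ≤ k := by simpa using hnk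
      · have : (Finset.univ.filter fun i =>
            G.SPrefers i ω true ∧ G.WPrefers i ω' true) = ∅ := by
          rw [Finset.filter_eq_empty_iff]
          intro i _ hi
          exact ((hWS' i ω').1 hi.2) (hB i)
        simp [this]
    -- Dichotomy from the first ≺ₖ
    have H1 : (∀ i, m i ≠ ω → G.SPrefers i ω true) ∨
        (∃ ω₀, m = (fun _ => ω₀) ∧ n ≤ k ∧ ∀ i, G.SPrefers i ω₀ false) := by
      rcases hd1 with ⟨ω₀, hp, hall⟩ | ⟨ω₀, hp, hall⟩
      · left
        intro i hi
        have h0 : ω = ω₀ := hpure _ _ hp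
        have := hall i ((hC1 i).2 hi)
        rwa [← h0] at this
      · by_cases h0 : ω₀ = ω
        · left
          intro i hi
          exact absurd (by rw [hp, h0]) hi
        · right
          have hmem : ∀ i, i ∈ diffSet (fun _ => ω) m := by
            intro i
            rw [hC1 i, hp]
            exact fun h => h0 h
          refine ⟨ω₀, hp, ?_, fun i => hall i (hmem i)⟩
          have : (diffSet (fun _ : Fin n => ω) m) = Finset.univ :=
            Finset.eq_univ_of_forall hmem
          rw [this] at hc1
          simpa using hc1
    -- Dichotomy from the second ≺ₖ
    have H2 : (∀ i, m i ≠ ω' → G.SPrefers i ω' false) ∨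
        (∃ ω₀, m = (fun _ => ω₀) ∧ n ≤ k ∧ ∀ i, G.SPrefers i ω₀ true) := by
      rcases hd2 with ⟨ω₀, hp, hall⟩ | ⟨ω₀, hp, hall⟩
      · by_cases h0 : ω₀ = ω'
        · left
          intro i hi
          exact absurd (by rw [hp, h0]) hi
        · right
          have hmem : ∀ i, i ∈ diffSet m (fun _ => ω') := by
            intro i
            rw [hC2 i, hp]
            exact fun h => h0 h
          refine ⟨ω₀, hp, ?_, fun i => hall i (hmem i)⟩
          have : (diffSet m (fun _ : Fin n => ω')) = Finset.univ :=
            Finset.eq_univ_of_forall hmem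
          rw [this] at hc2
          simpa using hc2
      · left
        intro i hi
        have h0 : ω' = ω₀ := hpure _ _ hp
        have := hall i ((hC2 i).2 hi)
        rwa [← h0] at this
    rcases H1 with hA | ⟨ω₀, hp, hnk, hall⟩
    · rcases H2 with hB | ⟨ω₀, hp, hnk, hall⟩
      · -- main case
        refine ⟨?_, ?_, ?_, ?_⟩
        · rw [Finset.filter_eq_empty_iff]
          intro i _ hi
          have h1 : m i = ω := by
            by_contra h
            exact ((hWS i ω).1 hi.1) (hA i h)
          have h2 : m i = ω' := by
            by_contra h
            exact ((hWS' i ω').1 hi.2) (hB i h)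
          exact hne (h1 ▸ h2)
        · have hsub : (Finset.univ : Finset (Fin n)) ⊆
              diffSet (fun _ => ω) m ∪ diffSet m (fun _ => ω') := by
            intro i _
            rw [Finset.mem_union, hC1, hC2]
            by_cases h : m i = ω
            · right; rw [h]; exact hne
            · left; exact h
          have := (Finset.card_le_card hsub).trans (Finset.card_union_le _ _)
          simp only [Finset.card_univ, Fintype.card_fin] at this
          omega
        · refine le_trans (Finset.card_le_card ?_) hc2
          intro i hi
          rw [Finset.mem_filter] at hi
          rw [hC2 i]
          have h1 : m i = ω := by
            by_contra h
            exact ((hWS i ω).1 hi.2.1) (hA i h)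
          rw [h1]; exact hne
        · refine le_trans (Finset.card_le_card ?_) hc1
          intro i hi
          rw [Finset.mem_filter] at hi
          rw [hC1 i]
          have h2 : m i = ω' := by
            by_contra h
            exact ((hWS' i ω').1 hi.2.2) (hB i h)
          rw [h2]; exact Ne.symm hne
      · -- all senders strictly prefer 1 in ω₀, m = ω₀-pure
        by_cases h0 : ω₀ = ω
        · exact finishA (fun i => h0 ▸ hall i) hnk
        · refine finishA (fun i => hA i ?_) hnk
          rw [hp]
          exact fun h => h0 h
    · -- all senders strictly prefer 0 in ω₀, m = ω₀-pure
      by_cases h0 : ω₀ = ω'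
      · exact finishB (fun i => h0 ▸ hall i) hnk
      · rcases H2 with hB | ⟨ω₁, hp', hnk', hall'⟩
        · refine finishB (fun i => hB i ?_) hnk
          rw [hp]
          exact fun h => h0 h
        · exfalso
          have h01 : ω₀ = ω₁ := hpure _ _ (hp ▸ hp')
          have h1 := hall ⟨0, hn1⟩
          have h2 := hall' ⟨0, hn1⟩
          rw [← h01] at h2
          exact absurd h1 (by simpa [IAGame.SPrefers, not_lt] using le_of_lt h2)
  · rintro ⟨hX, h2k, hc01, hc10⟩
    have hS0T : (Finset.univ.filter fun i =>
        G.SPrefers i ω true ∧ G.WPrefers i ω' true) ⊆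
        (Finset.univ.filter fun i => G.SPrefers i ω true) :=
      Finset.filter_subset_filter _ (by intro i hi; exact hi) |>.trans
        (Finset.filter_subset_filter _ (le_refl _)) |>.trans (by
          intro i hi
          rw [Finset.mem_filter] at hi ⊢
          exact ⟨hi.1, hi.2.1⟩)
    -- the complement of T = {i : SPrefers i ω true} has card ≤ k
    have hTcompl : (Finset.univ.filter fun i => ¬ G.SPrefers i ω true).card ≤ k := by
      refine le_trans (Finset.card_le_card ?_) hc01
      intro i hi
      rw [Finset.mem_filter] at hi ⊢
      have hw : G.WPrefers i ω false := (hWS i ω).2 hi.2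
      refine ⟨hi.1, hw, ?_⟩
      by_contra hns
      have hw' : G.WPrefers i ω' true := (hWS' i ω').2 hns
      have : i ∈ (Finset.univ.filter fun i =>
          G.WPrefers i ω false ∧ G.WPrefers i ω' true) := by
        rw [Finset.mem_filter]; exact ⟨hi.1, hw, hw'⟩
      rw [hX] at this
      exact absurd this (Finset.notMem_empty i)
    have hTbig : n - k ≤ (Finset.univ.filter fun i => G.SPrefers i ω true).card := by
      have := Finset.card_filter_add_card_filter_not
        (s := (Finset.univ : Finset (Fin n))) (p := fun i => G.SPrefers i ω true)
      simp only [Finset.card_univ, Fintype.card_fin] at this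
      omega
    set t := max (Finset.univ.filter fun i =>
        G.SPrefers i ω true ∧ G.WPrefers i ω' true).card (n - k) with ht
    obtain ⟨C, hSC, hCT, hCcard⟩ :=
      Finset.exists_subsuperset_card_eq hS0T (le_max_left _ _)
        (max_le (Finset.card_le_card hS0T) hTbig)
    refine ⟨fun i => if i ∈ C then ω' else ω, ⟨?_, Or.inl ⟨ω, rfl, ?_⟩⟩,
      ⟨?_, Or.inr ⟨ω', rfl, ?_⟩⟩⟩
    · have : diffSet (fun _ : Fin n => ω) (fun i => if i ∈ C then ω' else ω) = C := by
        ext i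
        by_cases h : i ∈ C <;> simp [diffSet, h, hne, Ne.symm hne]
      rw [this, hCcard]
      exact max_le hc10 (by omega)
    · intro i hi
      have : i ∈ C := by
        by_contra h
        simp [diffSet, h] at hi
      have := hCT this
      rw [Finset.mem_filter] at this
      exact this.2
    · have : diffSet (fun i => if i ∈ C then ω' else ω) (fun _ : Fin n => ω') = Cᶜ := by
        ext i
        by_cases h : i ∈ C <;> simp [diffSet, h, hne]
      rw [this, Finset.card_compl, hCcard]
      simp only [Fintype.card_fin]
      omega
    · intro i hi
      have hiC : i ∉ C := by
        by_contra h
        simp [diffSet, h] at hi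
      by_contra hns
      have hw' : G.WPrefers i ω' true := (hWS' i ω').2 hns
      by_cases hs : G.SPrefers i ω true
      · exact hiC (hSC (by rw [Finset.mem_filter]; exact ⟨Finset.mem_univ i, hs, hw'⟩))
      · have : i ∈ (Finset.univ.filter fun i =>
            G.WPrefers i ω false ∧ G.WPrefers i ω' true) := by
          rw [Finset.mem_filter]
          exact ⟨Finset.mem_univ i, (hWS i ω).2 hs, hw'⟩
        rw [hX] at this
        exact absurd this (Finset.notMem_empty i)
end
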